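/- For a uniformly random permutation π of {1,...,n} with n ≥ 3, and any r with 3 ≤ r ≤ n, the probability that the first occurrence (in lexicographic order of 3-subsets) of an increasing pattern π(a)<π(b)<π(c) is at the triple {1,2,r} equals 1/(r-1) - 1/r. Equivalently, the number of permutations of {1,...,n} whose lexicographically first increasing triple is {1,2,r} is n!·(1/(r-1) - 1/r) = (r-2)!·(n!/r!). -/

import Mathlib

open Finset

attribute [local instance] Classical.propDecidable

/-- The lexicographically first increasing (I-II-III) pattern of `π` occurs at
positions `a < b < c` (0-indexed elements of `Fin n`). -/
def FirstIncTripleAt (n : ℕ) (π : Equiv.Perm (Fin n)) (a b c : Fin n) : Prop :=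
  a < b ∧ b < c ∧ π a < π b ∧ π b < π c ∧
  ∀ d e f : Fin n, d < e → e < f →
    (d < a ∨ (d = a ∧ (e < b ∨ (e = b ∧ f < c)))) →
    ¬ (π d < π e ∧ π e < π f)

lemma swap_mem_finset {α : Type*} [DecidableEq α] {s : Finset α} {a b x : α}
    (ha : a ∈ s) (hb : b ∈ s) (hx : x ∈ s) : Equiv.swap a b x ∈ s := by
  rcases eq_or_ne x a with rfl | hxa
  · rwa [Equiv.swap_apply_left]
  rcases eq_or_ne x b with rfl | hxb
  · rwa [Equiv.swap_apply_right]
  · rwa [Equiv.swap_apply_of_ne_of_ne hxa hxb]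

lemma count_key (n r : ℕ) (hr3 : 3 ≤ r) (hrn : r ≤ n) (p1 pR : Fin n)
    (hp1 : (p1 : ℕ) = 1) (hpR : (pR : ℕ) = r - 1) :
    (Finset.univ.filter (fun π : Equiv.Perm (Fin n) =>
      (∀ x : Fin n, (x : ℕ) < r - 1 → (x : ℕ) ≠ 1 → π x < π p1) ∧ π p1 < π pR)).card
      * (r * (r - 1)) = Nat.factorial n := by
  classical
  set U : Finset (Fin n) := univ.filter (fun i => (i : ℕ) < r) with hUdef
  have hmemU : ∀ x : Fin n, x ∈ U ↔ (x : ℕ) < r := by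
    intro x; simp [hUdef]
  have hp1U : p1 ∈ U := (hmemU _).2 (by omega)
  have hpRU : pR ∈ U := (hmemU _).2 (by omega)
  have hp1R : p1 ≠ pR := by
    intro h; rw [h] at hp1; omega
  have hcardU : U.card = r := by
    have h : U.card = (Finset.range r).card :=
      Finset.card_bij (fun a _ => (a : ℕ))
        (fun a ha => Finset.mem_range.mpr ((hmemU a).1 ha))
        (fun a _ b _ h => Fin.ext h)
        (fun m hm => ⟨⟨m, by have := Finset.mem_range.mp hm; omega⟩,
          (hmemU _).2 (by simpa using Finset.mem_range.mp hm), rfl⟩)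
    simpa using h
  -- the rearranging permutation
  set u : Fin n → Fin n → Equiv.Perm (Fin n) := fun i j =>
    (Equiv.swap (Equiv.swap i pR j) p1) * (Equiv.swap i pR) with hudef
  have hu_i : ∀ i j : Fin n, i ≠ j → u i j i = pR := by
    intro i j hij
    simp only [hudef, Equiv.Perm.mul_apply, Equiv.swap_apply_left]
    apply Equiv.swap_apply_of_ne_of_ne
    · intro h
      exact hij (Equiv.injective _ (by rw [Equiv.swap_apply_left, ← h]))
    · exact hp1R.symm
  have hu_j : ∀ i j : Fin n, u i j j = p1 := by
    intro i j
    simp only [hudef, Equiv.Perm.mul_apply, Equiv.swap_apply_left]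
  have hu_mem : ∀ i j x : Fin n, i ∈ U → j ∈ U → x ∈ U → u i j x ∈ U := by
    intro i j x hi hj hx
    simp only [hudef, Equiv.Perm.mul_apply]
    exact swap_mem_finset (swap_mem_finset hi hpRU hj) hp1U
      (swap_mem_finset hi hpRU hx)
  have hu_inv_mem : ∀ i j x : Fin n, i ∈ U → j ∈ U → x ∈ U → (u i j)⁻¹ x ∈ U := by
    intro i j x hi hj hx
    simp only [hudef, mul_inv_rev, Equiv.swap_inv, Equiv.Perm.mul_apply]
    exact swap_mem_finset hi hpRU
      (swap_mem_finset (swap_mem_finset hi hpRU hj) hp1U hx)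
  set Gd : Equiv.Perm (Fin n) → Prop := fun π =>
    (∀ x : Fin n, (x : ℕ) < r - 1 → (x : ℕ) ≠ 1 → π x < π p1) ∧ π p1 < π pR with hGd
  set S : Finset (Equiv.Perm (Fin n)) := univ.filter Gd with hS
  -- second-max property
  have Hsec : ∀ π : Equiv.Perm (Fin n), Gd π → ∀ i ∈ U, ∀ j ∈ U, i ≠ j →
      ∀ x ∈ U, x ≠ i → x ≠ j → (π * u i j) x < (π * u i j) j := by
    intro π hπ i hi j hj hij x hx hxi hxj
    have hy : u i j x ∈ U := hu_mem i j x hi hj hx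
    have hy1 : u i j x ≠ p1 := by
      rw [← hu_j i j]; exact fun h => hxj ((u i j).injective h)
    have hyR : u i j x ≠ pR := by
      rw [← hu_i i j hij]; exact fun h => hxi ((u i j).injective h)
    have hylt : ((u i j x : Fin n) : ℕ) < r - 1 := by
      have h1 := (hmemU _).1 hy
      have h2 : ((u i j x : Fin n) : ℕ) ≠ r - 1 := by
        intro h; exact hyR (Fin.ext (by rw [h, hpR]))
      omega
    have hyne1 : ((u i j x : Fin n) : ℕ) ≠ 1 := by
      intro h; exact hy1 (Fin.ext (by rw [h, hp1]))
    have := hπ.1 (u i j x) hylt hyne1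
    simpa [Equiv.Perm.mul_apply, hu_j i j] using this
  have Hmax : ∀ π : Equiv.Perm (Fin n), Gd π → ∀ i ∈ U, ∀ j ∈ U, i ≠ j →
      ∀ x ∈ U, x ≠ i → (π * u i j) x < (π * u i j) i := by
    intro π hπ i hi j hj hij x hx hxi
    have hji : (π * u i j) j < (π * u i j) i := by
      simp only [Equiv.Perm.mul_apply, hu_j i j, hu_i i j hij]
      exact hπ.2
    rcases eq_or_ne x j with rfl | hxj
    · exact hji
    · exact (Hsec π hπ i hi j hj hij x hx hxi hxj).trans hji
  have hbij : (S ×ˢ U.offDiag).card = (univ : Finset (Equiv.Perm (Fin n))).card := by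
    apply Finset.card_bij (fun q _ => q.1 * u q.2.1 q.2.2)
    · intro a ha; exact Finset.mem_univ _
    · -- injectivity
      rintro ⟨π, i, j⟩ ha ⟨π', i', j'⟩ ha' heq
      simp only [hS, Finset.mem_product, Finset.mem_filter, Finset.mem_offDiag] at ha ha'
      obtain ⟨⟨-, hπ⟩, hi, hj, hij⟩ := ha
      obtain ⟨⟨-, hπ'⟩, hi', hj', hij'⟩ := ha'
      dsimp only at heq
      have hii : i = i' := by
        by_contra hne
        have h1 := Hmax π hπ i hi j hj hij i' hi' (Ne.symm hne)
        have h2 := Hmax π' hπ' i' hi' j' hj' hij' i hi hne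
        rw [← heq] at h2
        exact absurd (h1.trans h2) (lt_irrefl _)
      subst hii
      have hjj : j = j' := by
        by_contra hne
        have h1 := Hsec π hπ i hi j hj hij j' hj' (Ne.symm hij') (Ne.symm hne)
        have h2 := Hsec π' hπ' i hi' j' hj' hij' j hj (Ne.symm hij) hne
        rw [← heq] at h2
        exact absurd (h1.trans h2) (lt_irrefl _)
      subst hjj
      have : π = π' := mul_right_cancel heq
      simp [this]
    · -- surjectivity
      intro σ hσ
      have hUne : U.Nonempty := Finset.card_pos.mp (by omega)
      obtain ⟨i, hiU, hi⟩ := Finset.exists_max_image U σ hUne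
      have hErne : (U.erase i).Nonempty := by
        apply Finset.card_pos.mp
        rw [Finset.card_erase_of_mem hiU]
        omega
      obtain ⟨j, hjE, hj⟩ := Finset.exists_max_image (U.erase i) σ hErne
      have hjU : j ∈ U := Finset.mem_of_mem_erase hjE
      have hji : j ≠ i := Finset.ne_of_mem_erase hjE
      set π := σ * (u i j)⁻¹ with hπdef
      have hinv1 : (u i j)⁻¹ p1 = j := by
        rw [← hu_j i j, Equiv.Perm.inv_def, Equiv.symm_apply_apply]
      have hinvR : (u i j)⁻¹ pR = i := by
        rw [← hu_i i j hji.symm, Equiv.Perm.inv_def, Equiv.symm_apply_apply]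
      have hπ1 : π p1 = σ j := by rw [hπdef]; simp [Equiv.Perm.mul_apply, hinv1]
      have hπR : π pR = σ i := by rw [hπdef]; simp [Equiv.Perm.mul_apply, hinvR]
      have hGdπ : Gd π := by
        constructor
        · intro x hx hx1
          have hxU : x ∈ U := (hmemU _).2 (by omega)
          have hx1' : x ≠ p1 := fun h => hx1 (by rw [h, hp1])
          have hxR : x ≠ pR := fun h => (by rw [h, hpR] at hx; omega : False)
          set y := (u i j)⁻¹ x with hy
          have hyU : y ∈ U := hu_inv_mem i j x hiU hjU hxU
          have hyi : y ≠ i := by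
            intro h; apply hxR
            have : x = u i j y := by rw [hy]; simp
            rw [this, h, hu_i i j hji.symm]
          have hyj : y ≠ j := by
            intro h; apply hx1'
            have : x = u i j y := by rw [hy]; simp
            rw [this, h, hu_j i j]
          have hyE : y ∈ U.erase i := Finset.mem_erase.mpr ⟨hyi, hyU⟩
          have hle : σ y ≤ σ j := hj y hyE
          have hne : σ y ≠ σ j := fun h => hyj (σ.injective h)
          have : π x = σ y := by rw [hπdef]; simp [Equiv.Perm.mul_apply, hy]
          rw [this, hπ1]
          exact lt_of_le_of_ne hle hne
        · rw [hπ1, hπR]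
          exact lt_of_le_of_ne (hi j hjU) (fun h => hji (σ.injective h))
      refine ⟨⟨π, i, j⟩, ?_, ?_⟩
      · simp only [hS, Finset.mem_product, Finset.mem_filter, Finset.mem_offDiag]
        exact ⟨⟨Finset.mem_univ _, hGdπ⟩, hiU, hjU, hji.symm⟩
      · rw [hπdef]; simp [mul_assoc]
  have hod : U.offDiag.card = r * (r - 1) := by
    rw [Finset.offDiag_card, hcardU]
    cases r with
    | zero => rfl
    | succ m => rw [Nat.succ_sub_one, Nat.mul_succ, Nat.add_sub_cancel]
  have hcard : S.card * (r * (r - 1)) = Nat.factorial n := by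
    have := hbij
    rw [Finset.card_product, hod] at this
    rw [this]
    rw [Finset.card_univ, Fintype.card_perm, Fintype.card_fin]
  exact hcard

lemma char_lemma (n r : ℕ) (hn : 3 ≤ n) (hr3 : 3 ≤ r) (hrn : r ≤ n)
    (π : Equiv.Perm (Fin n)) :
    FirstIncTripleAt n π ⟨0, Nat.lt_of_lt_of_le (by norm_num) hn⟩ ⟨1, Nat.lt_of_lt_of_le (by norm_num) hn⟩ ⟨r - 1, Nat.lt_of_lt_of_le (Nat.sub_lt (by omega) Nat.one_pos) hrn⟩ ↔
    ((∀ x : Fin n, (x : ℕ) < r - 1 → (x : ℕ) ≠ 1 → π x < π ⟨1, Nat.lt_of_lt_of_le (by norm_num) hn⟩) ∧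
      π ⟨1, Nat.lt_of_lt_of_le (by norm_num) hn⟩ < π ⟨r - 1, Nat.lt_of_lt_of_le (Nat.sub_lt (by omega) Nat.one_pos) hrn⟩) := by
  constructor
  · rintro ⟨h01, h1R, hpi01, hpi1R, hmin⟩
    refine ⟨?_, hpi1R⟩
    intro x hx hx1
    rcases Nat.lt_or_ge (x : ℕ) 2 with hx2 | hx2
    · have hx0 : (x : ℕ) = 0 := by omega
      have : x = ⟨0, by omega⟩ := Fin.ext hx0
      rw [this]; exact hpi01
    · have := hmin ⟨0, by omega⟩ ⟨1, by omega⟩ x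
        (by simp [Fin.lt_def]) (by simp [Fin.lt_def]; omega)
        (Or.inr ⟨rfl, Or.inr ⟨rfl, by simp [Fin.lt_def]; omega⟩⟩)
      have hnlt : ¬ (π ⟨1, by omega⟩ < π x) := fun h => this ⟨hpi01, h⟩
      have hne : π x ≠ π ⟨1, by omega⟩ := by
        intro h
        have hx : x = ⟨1, by omega⟩ := π.injective h
        exact hx1 (by rw [hx])
      exact lt_of_le_of_ne (not_lt.mp hnlt) hne
  · rintro ⟨hmaxx, h1R⟩
    refine ⟨by simp [Fin.lt_def], by simp [Fin.lt_def]; omega, ?_, h1R, ?_⟩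
    · exact hmaxx ⟨0, by omega⟩ (by simp; omega) (by simp)
    · intro d e f hde hef hlex
      rintro ⟨hde', hef'⟩
      rcases hlex with hd | ⟨hd, he | ⟨he, hf⟩⟩
      · simp [Fin.lt_def] at hd
      · subst hd
        simp [Fin.lt_def] at hde he
        omega
      · subst hd; subst he
        simp only [Fin.lt_def] at hde hef hf
        have hfval : (f : ℕ) < r - 1 := hf
        have hfne : (f : ℕ) ≠ 1 := by have h2 : (1:ℕ) < (f:ℕ) := hef; omega
        have := hmaxx f hfval hfne
        exact absurd (this.trans hef') (lt_irrefl _)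

theorem stmt_0 (n r : ℕ) (hn : 3 ≤ n) (hr3 : 3 ≤ r) (hrn : r ≤ n) :
    ((Finset.univ.filter (fun π : Equiv.Perm (Fin n) =>
        FirstIncTripleAt n π ⟨0, by omega⟩ ⟨1, by omega⟩ ⟨r - 1, by omega⟩)).card : ℚ)
        / (Nat.factorial n : ℚ)
      = 1 / ((r : ℚ) - 1) - 1 / (r : ℚ) ∧
    ((Finset.univ.filter (fun π : Equiv.Perm (Fin n) =>
        FirstIncTripleAt n π ⟨0, by omega⟩ ⟨1, by omega⟩ ⟨r - 1, by omega⟩)).card : ℚ)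
      = (Nat.factorial (r - 2) : ℚ) * ((Nat.factorial n : ℚ) / (Nat.factorial r : ℚ)) := by
  classical
  have hfilter : (Finset.univ.filter (fun π : Equiv.Perm (Fin n) =>
      FirstIncTripleAt n π ⟨0, by omega⟩ ⟨1, by omega⟩ ⟨r - 1, by omega⟩)) =
      (Finset.univ.filter (fun π : Equiv.Perm (Fin n) =>
        (∀ x : Fin n, (x : ℕ) < r - 1 → (x : ℕ) ≠ 1 → π x < π ⟨1, by omega⟩) ∧
          π ⟨1, by omega⟩ < π ⟨r - 1, by omega⟩)) := by
    apply Finset.filter_congr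
    intro π _
    exact char_lemma n r hn hr3 hrn π
  have key : (Finset.univ.filter (fun π : Equiv.Perm (Fin n) =>
      FirstIncTripleAt n π ⟨0, by omega⟩ ⟨1, by omega⟩ ⟨r - 1, by omega⟩)).card
      * (r * (r - 1)) = Nat.factorial n := by
    rw [hfilter]
    exact count_key n r hr3 hrn ⟨1, by omega⟩ ⟨r - 1, by omega⟩ rfl rfl
  set N := (Finset.univ.filter (fun π : Equiv.Perm (Fin n) =>
      FirstIncTripleAt n π ⟨0, by omega⟩ ⟨1, by omega⟩ ⟨r - 1, by omega⟩)).card with hN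
  have keyQ : (N : ℚ) * ((r : ℚ) * ((r : ℚ) - 1)) = (Nat.factorial n : ℚ) := by
    have := congrArg (Nat.cast : ℕ → ℚ) key
    push_cast [Nat.cast_sub (show 1 ≤ r by omega)] at this
    linarith [this]
  have hfac : (Nat.factorial n : ℚ) ≠ 0 := by
    exact_mod_cast Nat.factorial_ne_zero n
  have hr0 : (r : ℚ) ≠ 0 := by
    have : (0 : ℚ) < r := by exact_mod_cast (by omega : 0 < r)
    linarith
  have hr1 : (r : ℚ) - 1 ≠ 0 := by
    have : (3 : ℚ) ≤ r := by exact_mod_cast hr3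
    intro h; linarith
  constructor
  · field_simp
    linear_combination keyQ
  · obtain ⟨s, rfl⟩ : ∃ s, r = s + 2 := ⟨r - 2, by omega⟩
    have hred : s + 2 - 2 = s := by omega
    rw [hred]
    have hfr : Nat.factorial (s + 2) = (s + 2) * ((s + 1) * Nat.factorial s) := by
      rw [Nat.factorial_succ, Nat.factorial_succ]
    rw [hfr]
    have hfs : (Nat.factorial s : ℚ) ≠ 0 := by
      exact_mod_cast Nat.factorial_ne_zero s
    have keyQ' : (N : ℚ) * (((s : ℚ) + 2) * ((s : ℚ) + 1)) = (Nat.factorial n : ℚ) := by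
      have : ((s : ℚ) + 2) - 1 = (s : ℚ) + 1 := by ring
      calc (N : ℚ) * (((s : ℚ) + 2) * ((s : ℚ) + 1))
          = (N : ℚ) * (((s + 2 : ℕ) : ℚ) * (((s + 2 : ℕ) : ℚ) - 1)) := by push_cast; ring
        _ = (Nat.factorial n : ℚ) := keyQ
    push_cast
    field_simp
    linear_combination keyQ'
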